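/- Let P be a probability measure on a measurable space Ω and let κ ∈ (0,1). (a) If f is a p-function w.r.t. P, then the function ω ↦ κ·f(ω)^{κ−1} (taking values in [0,∞], with the convention 0^{κ−1} = ∞) is an e-function w.r.t. P, i.e. ∫ κ·f^{κ−1} dP ≤ 1. (b) If f is an e-function w.r.t. P, then the function ω ↦ min(1, 1/f(ω)) (with 1/0 = ∞, 1/∞ = 0) is a p-function w.r.t. P, i.e. P{ω : min(1, 1/f(ω)) ≤ ε} ≤ ε for every ε > 0. -/

import Mathlib

open MeasureTheory Set
open scoped ENNReal

private lemma aux_integrable {κ : ℝ} (_hκ0 : 0 < κ) (hκ1 : κ < 1) {r : ℝ} (hr : 0 < r) :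
    IntegrableOn (fun s : ℝ => κ * (1 - κ) * s ^ (κ - 2)) (Ioi r) := by
  exact (integrableOn_Ioi_rpow_of_lt (by linarith) hr).const_mul _

/-- Tail integral identity: for `0 < r`,
`∫⁻ s in Ioi r, ofReal (κ(1-κ) s^(κ-2)) = ofReal κ * (ofReal r)^(κ-1)`. -/
private lemma aux_tail {κ : ℝ} (hκ0 : 0 < κ) (hκ1 : κ < 1) {r : ℝ} (hr : 0 < r) :
    ∫⁻ s in Ioi r, ENNReal.ofReal (κ * (1 - κ) * s ^ (κ - 2)) =
      ENNReal.ofReal κ * (ENNReal.ofReal r) ^ (κ - 1) := by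
  rw [← ofReal_integral_eq_lintegral_ofReal (aux_integrable hκ0 hκ1 hr)]
  · have hval : ∫ s in Ioi r, κ * (1 - κ) * s ^ (κ - 2) = κ * r ^ (κ - 1) := by
      rw [MeasureTheory.integral_const_mul, integral_Ioi_rpow_of_lt (by linarith) hr]
      have h2 : κ - 2 + 1 = κ - 1 := by ring
      rw [h2]
      have h3 : κ - 1 ≠ 0 := by linarith
      field_simp
      ring
    rw [hval, ENNReal.ofReal_mul hκ0.le, ENNReal.ofReal_rpow_of_pos hr]
  · filter_upwards [ae_restrict_mem measurableSet_Ioi] with s hs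
    have hs0 : (0:ℝ) < s := hr.trans hs
    have h1 : (0:ℝ) < 1 - κ := by linarith
    positivity

theorem stmt0 {Ω : Type*} [MeasurableSpace Ω] (P : Measure Ω) [IsProbabilityMeasure P]
    (κ : ℝ) (hκ : κ ∈ Set.Ioo (0 : ℝ) 1) :
    (∀ f : Ω → ℝ≥0∞, Measurable f → (∀ ω, f ω ≤ 1) →
      (∀ ε : ℝ≥0∞, 0 < ε → P {ω | f ω ≤ ε} ≤ ε) →
      ∫⁻ ω, ENNReal.ofReal κ * f ω ^ (κ - 1) ∂P ≤ 1) ∧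
    (∀ f : Ω → ℝ≥0∞, Measurable f → ∫⁻ ω, f ω ∂P ≤ 1 →
      ∀ ε : ℝ≥0∞, 0 < ε → P {ω | min 1 (f ω)⁻¹ ≤ ε} ≤ ε) := by
  obtain ⟨hκ0, hκ1⟩ := hκ
  constructor
  · -- part (a)
    intro f hf hf1 hp
    set c : ℝ → ℝ≥0∞ := fun s => ENNReal.ofReal (κ * (1 - κ) * s ^ (κ - 2)) with hc
    set F : Ω → ℝ → ℝ≥0∞ := fun ω s => if f ω < ENNReal.ofReal s then c s else 0 with hFdef
    have hcmeas : Measurable c := by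
      apply ENNReal.measurable_ofReal.comp
      fun_prop
    -- a.e. positivity of f
    have h0 : ∀ᵐ ω ∂P, 0 < f ω := by
      rw [ae_iff]
      have hsub : ∀ ε : ℝ≥0∞, 0 < ε → P {ω | ¬ 0 < f ω} ≤ ε := by
        intro ε hε
        refine le_trans (measure_mono ?_) (hp ε hε)
        intro ω hω
        simp only [mem_setOf_eq, not_lt, nonpos_iff_eq_zero] at hω
        simp [mem_setOf_eq, hω]
      refine le_antisymm ?_ zero_le
      refine ENNReal.le_of_forall_pos_le_add fun ε hε _ => ?_
      simpa using hsub ε (by exact_mod_cast hε)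
    -- pointwise identity for 0 < x ≤ 1
    have key : ∀ ω, 0 < f ω →
        ∫⁻ s in Ioi (0:ℝ), F ω s = ENNReal.ofReal κ * f ω ^ (κ - 1) := by
      intro ω hω
      set r : ℝ := (f ω).toReal with hrdef
      have hne : f ω ≠ ⊤ := ne_top_of_le_ne_top ENNReal.one_ne_top (hf1 ω)
      have hfr : f ω = ENNReal.ofReal r := (ENNReal.ofReal_toReal hne).symm
      have hr : 0 < r := ENNReal.toReal_pos hω.ne' hne
      have step1 : ∫⁻ s in Ioi (0:ℝ), F ω s = ∫⁻ s in Ioi (0:ℝ), (Ioi r).indicator c s := by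
        refine setLIntegral_congr_fun measurableSet_Ioi ?_
        intro s hs
        have : f ω < ENNReal.ofReal s ↔ r < s := by
          rw [hfr]; exact ENNReal.ofReal_lt_ofReal_iff hs
        simp only [hFdef, Set.indicator_apply, mem_Ioi, this]
      rw [step1, lintegral_indicator measurableSet_Ioi, Measure.restrict_restrict measurableSet_Ioi,
        Set.inter_eq_left.mpr (Ioi_subset_Ioi hr.le)]
      rw [hfr]
      exact aux_tail hκ0 hκ1 hr
    have hcongr : ∫⁻ ω, ENNReal.ofReal κ * f ω ^ (κ - 1) ∂P
        = ∫⁻ ω, (∫⁻ s in Ioi (0:ℝ), F ω s) ∂P :=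
      lintegral_congr_ae (h0.mono fun ω hω => (key ω hω).symm)
    have hFm : Measurable (Function.uncurry F) := by
      apply Measurable.ite
      · exact measurableSet_lt (hf.comp measurable_fst)
          (ENNReal.measurable_ofReal.comp measurable_snd)
      · exact hcmeas.comp measurable_snd
      · exact measurable_const
    rw [hcongr, lintegral_lintegral_swap hFm.aemeasurable]
    have hinner : ∀ s : ℝ, ∫⁻ ω, F ω s ∂P = c s * P {ω | f ω < ENNReal.ofReal s} := by
      intro s
      have : (fun ω => F ω s) = {ω | f ω < ENNReal.ofReal s}.indicator (fun _ => c s) := by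
        funext ω; simp [hFdef, Set.indicator_apply, mem_setOf_eq]
      rw [this, lintegral_indicator_const (measurableSet_lt hf measurable_const)]
    calc ∫⁻ s in Ioi (0:ℝ), (∫⁻ ω, F ω s ∂P)
        ≤ ∫⁻ s in Ioi (0:ℝ), c s * min (ENNReal.ofReal s) 1 := by
          refine lintegral_mono_ae ?_
          filter_upwards [ae_restrict_mem measurableSet_Ioi] with s hs
          rw [hinner s]
          refine mul_le_mul_right (le_min ?_ prob_le_one) _
          refine le_trans (measure_mono fun ω (h : f ω < _) => h.le)
            (hp _ (ENNReal.ofReal_pos.mpr hs))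
      _ = 1 := by
          rw [← Set.Ioc_union_Ioi_eq_Ioi (zero_le_one (α := ℝ)),
            lintegral_union measurableSet_Ioi (Set.Ioc_disjoint_Ioi le_rfl)]
          have hI1 : ∫⁻ s in Ioc (0:ℝ) 1, c s * min (ENNReal.ofReal s) 1
              = ENNReal.ofReal (1 - κ) := by
            have heq : ∫⁻ s in Ioc (0:ℝ) 1, c s * min (ENNReal.ofReal s) 1
                = ∫⁻ s in Ioc (0:ℝ) 1, ENNReal.ofReal (κ * (1 - κ) * s ^ (κ - 1)) := by
              refine setLIntegral_congr_fun measurableSet_Ioc ?_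
              intro s hs
              beta_reduce
              have hs0 : (0:ℝ) < s := hs.1
              have hmin : min (ENNReal.ofReal s) 1 = ENNReal.ofReal s :=
                min_eq_left (ENNReal.ofReal_le_one.mpr hs.2)
              rw [hmin, hc, ← ENNReal.ofReal_mul
                (mul_nonneg (mul_nonneg hκ0.le (by linarith)) (Real.rpow_nonneg hs0.le _))]
              congr 1
              have : s ^ (κ - 1) = s ^ (κ - 2) * s := by
                rw [show κ - 1 = (κ - 2) + 1 by ring, Real.rpow_add hs0, Real.rpow_one]
              rw [this]; ring
            rw [heq, ← ofReal_integral_eq_lintegral_ofReal]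
            · congr 1
              have hint : ∫ s in Ioc (0:ℝ) 1, κ * (1 - κ) * s ^ (κ - 1)
                  = κ * (1 - κ) * ((1:ℝ) ^ (κ - 1 + 1) - 0 ^ (κ - 1 + 1)) / (κ - 1 + 1) := by
                rw [MeasureTheory.integral_const_mul,
                  ← intervalIntegral.integral_of_le (zero_le_one),
                  integral_rpow (Or.inl (by linarith))]
                ring
              rw [hint]
              have h1 : κ - 1 + 1 = κ := by ring
              rw [h1, Real.one_rpow, Real.zero_rpow hκ0.ne']
              field_simp
              norm_num
            · exact ((intervalIntegrable_iff_integrableOn_Ioc_of_le zero_le_one).mp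
                (intervalIntegral.intervalIntegrable_rpow' (by linarith))).const_mul _
            · filter_upwards [ae_restrict_mem measurableSet_Ioc] with s hs
              have hs0 : (0:ℝ) < s := hs.1
              exact mul_nonneg (mul_nonneg hκ0.le (by linarith)) (Real.rpow_nonneg hs0.le _)
          have hI2 : ∫⁻ s in Ioi (1:ℝ), c s * min (ENNReal.ofReal s) 1
              = ENNReal.ofReal κ := by
            have heq : ∫⁻ s in Ioi (1:ℝ), c s * min (ENNReal.ofReal s) 1
                = ∫⁻ s in Ioi (1:ℝ), ENNReal.ofReal (κ * (1 - κ) * s ^ (κ - 2)) := by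
              refine setLIntegral_congr_fun measurableSet_Ioi ?_
              intro s hs
              beta_reduce
              have hmin : min (ENNReal.ofReal s) 1 = 1 :=
                min_eq_right (ENNReal.one_le_ofReal.mpr (le_of_lt hs))
              rw [hmin, mul_one]
            rw [heq, aux_tail hκ0 hκ1 one_pos, ENNReal.ofReal_one, ENNReal.one_rpow, mul_one]
          rw [hI1, hI2, ← ENNReal.ofReal_add (by linarith) hκ0.le]
          norm_num
  · -- part (b)
    intro f hf hint ε hε
    rcases le_or_gt 1 ε with h1 | h1
    · exact le_trans prob_le_one h1
    · have hset : {ω | min 1 (f ω)⁻¹ ≤ ε} = {ω | ε⁻¹ ≤ f ω} := by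
        ext ω
        simp only [mem_setOf_eq, min_le_iff]
        constructor
        · rintro (h | h)
          · exact absurd (lt_of_le_of_lt h h1) (lt_irrefl _)
          · exact ENNReal.inv_le_iff_inv_le.mp h
        · intro h
          exact Or.inr (ENNReal.inv_le_iff_inv_le.mpr h)
      rw [hset]
      have hε0 : ε⁻¹ ≠ 0 := by
        simp only [ne_eq, ENNReal.inv_eq_zero]
        exact (h1.trans_le le_top).ne
      have hεt : ε⁻¹ ≠ ⊤ := by
        simp only [ne_eq, ENNReal.inv_eq_top]
        exact hε.ne'
      calc P {ω | ε⁻¹ ≤ f ω} ≤ (∫⁻ ω, f ω ∂P) / ε⁻¹ :=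
            meas_ge_le_lintegral_div hf.aemeasurable hε0 hεt
        _ ≤ 1 / ε⁻¹ := by gcongr
        _ = ε := by rw [one_div, inv_inv]
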